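/- Let G be a graph with maximum subgraph density ρ* = max_{S⊆V, S≠∅} |E(S)|/|S|. Then the optimal value of the LP: maximize ∑_{e∈E} y_e subject to y_e ≤ x_u and y_e ≤ x_v for each edge e = uv, ∑_{v∈V} x_v ≤ 1, and x,y ≥ 0, equals ρ*. -/

import Mathlib

open MeasureTheory Finset

lemma ind_integrable (a : ℝ) :
    IntegrableOn (fun r => if r ≤ a then (1:ℝ) else 0) (Set.Ioc 0 1) := by
  have : (fun r => if r ≤ a then (1:ℝ) else 0) = (Set.Iic a).indicator (fun _ => 1) := by
    ext r; simp [Set.indicator_apply]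
  rw [this]
  exact (integrableOn_const measure_Ioc_lt_top.ne).indicator measurableSet_Iic

lemma ind_integral (a : ℝ) (h0 : 0 ≤ a) (h1 : a ≤ 1) :
    ∫ r in Set.Ioc (0:ℝ) 1, (if r ≤ a then (1:ℝ) else 0) = a := by
  have : (fun r => if r ≤ a then (1:ℝ) else 0) = (Set.Iic a).indicator (fun _ => 1) := by
    ext r; simp [Set.indicator_apply]
  rw [this, setIntegral_indicator measurableSet_Iic]
  have : Set.Ioc (0:ℝ) 1 ∩ Set.Iic a = Set.Ioc 0 a := by
    ext r; simp only [Set.mem_inter_iff, Set.mem_Ioc, Set.mem_Iic]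
    exact ⟨fun ⟨⟨h, _⟩, h'⟩ => ⟨h, h'⟩, fun ⟨h, h'⟩ => ⟨⟨h, h'.trans h1⟩, h'⟩⟩
  rw [this]
  simp [Real.volume_Ioc, h0]

open Classical in
lemma charikar_key
    (V : Type*) [Fintype V] [DecidableEq V] [Nonempty V]
    (G : SimpleGraph V) [DecidableRel G.Adj]
    (x : V → ℝ) (y : Sym2 V → ℝ)
    (hx : ∀ v, 0 ≤ x v) (hy : ∀ e, 0 ≤ y e) (hsum : ∑ v, x v ≤ 1)
    (hc : ∀ e ∈ G.edgeFinset, ∀ v ∈ e, y e ≤ x v) :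
    ∑ e ∈ G.edgeFinset, y e ≤ sSup {t : ℝ | ∃ S : Finset V, S.Nonempty ∧
      t = ((G.edgeFinset.filter fun e => ∀ v ∈ e, v ∈ S).card : ℝ) / S.card} := by
  set D := {t : ℝ | ∃ S : Finset V, S.Nonempty ∧
      t = ((G.edgeFinset.filter fun e => ∀ v ∈ e, v ∈ S).card : ℝ) / S.card} with hD
  have hbdd : BddAbove D := by
    refine ⟨G.edgeFinset.card, ?_⟩
    rintro t ⟨S, hS, rfl⟩
    have hpos : (0:ℝ) < S.card := by exact_mod_cast Finset.card_pos.2 hS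
    rw [div_le_iff₀ hpos]
    have h1 : ((G.edgeFinset.filter fun e => ∀ v ∈ e, v ∈ S).card : ℝ) ≤ G.edgeFinset.card := by
      exact_mod_cast Finset.card_le_card (Finset.filter_subset _ _)
    have h2 : (1:ℝ) ≤ S.card := by exact_mod_cast Finset.card_pos.2 hS
    calc ((G.edgeFinset.filter fun e => ∀ v ∈ e, v ∈ S).card : ℝ)
        ≤ G.edgeFinset.card := h1
      _ ≤ G.edgeFinset.card * S.card := le_mul_of_one_le_right (by positivity) h2
  set ρ := sSup D with hρdef
  have hρ : ∀ S : Finset V, S.Nonempty →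
      ((G.edgeFinset.filter fun e => ∀ v ∈ e, v ∈ S).card : ℝ) / S.card ≤ ρ := by
    intro S hS
    exact le_csSup hbdd ⟨S, hS, rfl⟩
  have hρ0 : 0 ≤ ρ := by
    have := hρ Finset.univ Finset.univ_nonempty
    refine le_trans ?_ this
    positivity
  -- min over edge
  set m : Sym2 V → ℝ := Sym2.lift ⟨fun u v => min (x u) (x v), fun u v => min_comm _ _⟩ with hmdef
  have hm : ∀ (e : Sym2 V) (r : ℝ), r ≤ m e ↔ ∀ v ∈ e, r ≤ x v := by
    intro e r
    induction e using Sym2.ind with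
    | _ u v =>
      rw [hmdef, Sym2.lift_mk]
      simp only [le_min_iff, Sym2.mem_iff]
      constructor
      · rintro ⟨h1, h2⟩ w (rfl | rfl) <;> assumption
      · intro h; exact ⟨h u (Or.inl rfl), h v (Or.inr rfl)⟩
  have hx1 : ∀ v, x v ≤ 1 :=
    fun v => le_trans (Finset.single_le_sum (fun i _ => hx i) (Finset.mem_univ v)) hsum
  have hym : ∀ e ∈ G.edgeFinset, y e ≤ m e := fun e he => (hm e (y e)).2 (hc e he)
  have hm1 : ∀ e : Sym2 V, m e ≤ 1 := by
    intro e
    have := (hm e (m e)).1 le_rfl e.out.1 (Sym2.out_fst_mem e)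
    exact this.trans (hx1 _)
  -- per-edge integral bound
  have step1 : ∀ e ∈ G.edgeFinset,
      y e ≤ ∫ r in Set.Ioc (0:ℝ) 1, (if r ≤ m e then (1:ℝ) else 0) := by
    intro e he
    have hy1 : y e ≤ 1 := (hym e he).trans (hm1 e)
    rw [← ind_integral (y e) (hy e) hy1]
    refine setIntegral_mono_on (ind_integrable _) (ind_integrable _) measurableSet_Ioc ?_
    intro r _
    by_cases h : r ≤ y e
    · simp [h, h.trans (hym e he)]
    · by_cases h' : r ≤ m e <;> simp [h, h']
  set F : ℝ → ℝ := fun r => ∑ e ∈ G.edgeFinset, (if r ≤ m e then (1:ℝ) else 0) with hF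
  set Gf : ℝ → ℝ := fun r => ρ * ∑ v, (if r ≤ x v then (1:ℝ) else 0) with hGf
  have hFint : IntegrableOn F (Set.Ioc 0 1) :=
    integrable_finset_sum _ (fun e _ => ind_integrable (m e))
  have hGint : IntegrableOn Gf (Set.Ioc 0 1) :=
    (integrable_finset_sum _ (fun v _ => ind_integrable (x v))).const_mul ρ
  have hFG : ∀ r ∈ Set.Ioc (0:ℝ) 1, F r ≤ Gf r := by
    intro r _
    set S : Finset V := Finset.univ.filter (fun v => r ≤ x v) with hSdef
    have hFr : F r = ((G.edgeFinset.filter fun e => ∀ v ∈ e, v ∈ S).card : ℝ) := by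
      have h1 : F r = ((G.edgeFinset.filter (fun e => r ≤ m e)).card : ℝ) := by
        simp only [hF, Finset.sum_boole]
      rw [h1]
      congr 2
      refine Finset.filter_congr (fun e _ => ?_)
      rw [hm e r]
      constructor
      · intro h v hv; rw [hSdef, Finset.mem_filter]; exact ⟨Finset.mem_univ v, h v hv⟩
      · intro h v hv; have := h v hv; rw [hSdef, Finset.mem_filter] at this; exact this.2
    have hGr : Gf r = ρ * S.card := by
      simp only [hGf, Finset.sum_boole]; rfl

    rw [hFr, hGr]
    by_cases hS : S.Nonempty
    · have hpos : (0:ℝ) < S.card := by exact_mod_cast Finset.card_pos.2 hS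
      have := hρ S hS
      calc ((G.edgeFinset.filter fun e => ∀ v ∈ e, v ∈ S).card : ℝ)
          = ((G.edgeFinset.filter fun e => ∀ v ∈ e, v ∈ S).card : ℝ) / S.card * S.card := by
            field_simp
        _ ≤ ρ * S.card := mul_le_mul_of_nonneg_right this (le_of_lt hpos)
    · rw [Finset.not_nonempty_iff_eq_empty] at hS
      have hfe : (G.edgeFinset.filter fun e => ∀ v ∈ e, v ∈ S) = ∅ := by
        rw [Finset.filter_eq_empty_iff]
        intro e _ h
        have := h e.out.1 (Sym2.out_fst_mem e)
        rw [hS] at this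
        exact absurd this (Finset.notMem_empty _)
      rw [hfe, hS]
      simp
  calc ∑ e ∈ G.edgeFinset, y e
      ≤ ∑ e ∈ G.edgeFinset, ∫ r in Set.Ioc (0:ℝ) 1, (if r ≤ m e then (1:ℝ) else 0) :=
        Finset.sum_le_sum step1
    _ = ∫ r in Set.Ioc (0:ℝ) 1, F r := by
        rw [hF, integral_finset_sum _ (fun e _ => ind_integrable (m e))]
    _ ≤ ∫ r in Set.Ioc (0:ℝ) 1, Gf r :=
        setIntegral_mono_on hFint hGint measurableSet_Ioc hFG
    _ = ρ * ∑ v, x v := by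
        have h1 : ∫ r in Set.Ioc (0:ℝ) 1, Gf r
            = ρ * ∫ r in Set.Ioc (0:ℝ) 1, ∑ v, (if r ≤ x v then (1:ℝ) else 0) := by
          simp only [hGf]
          exact integral_const_mul ρ _
        rw [h1, integral_finset_sum _ (fun v _ => ind_integrable (x v))]
        congr 1
        exact Finset.sum_congr rfl (fun v _ => ind_integral (x v) (hx v) (hx1 v))
    _ ≤ ρ * 1 := mul_le_mul_of_nonneg_left hsum hρ0
    _ = ρ := mul_one ρ




open Classical in
theorem charikar_lp_densest_subgraph
    (V : Type*) [Fintype V] [DecidableEq V] [Nonempty V]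
    (G : SimpleGraph V) [DecidableRel G.Adj] :
    sSup {t : ℝ | ∃ (x : V → ℝ) (y : Sym2 V → ℝ),
        (∀ v, 0 ≤ x v) ∧ (∀ e, 0 ≤ y e) ∧ (∑ v, x v ≤ 1) ∧
        (∀ e ∈ G.edgeFinset, ∀ v ∈ e, y e ≤ x v) ∧
        t = ∑ e ∈ G.edgeFinset, y e}
      = sSup {t : ℝ | ∃ S : Finset V, S.Nonempty ∧
          t = ((G.edgeFinset.filter fun e => ∀ v ∈ e, v ∈ S).card : ℝ) / S.card} := by
  set LP := {t : ℝ | ∃ (x : V → ℝ) (y : Sym2 V → ℝ),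
        (∀ v, 0 ≤ x v) ∧ (∀ e, 0 ≤ y e) ∧ (∑ v, x v ≤ 1) ∧
        (∀ e ∈ G.edgeFinset, ∀ v ∈ e, y e ≤ x v) ∧
        t = ∑ e ∈ G.edgeFinset, y e} with hLP
  set D := {t : ℝ | ∃ S : Finset V, S.Nonempty ∧
          t = ((G.edgeFinset.filter fun e => ∀ v ∈ e, v ∈ S).card : ℝ) / S.card} with hD
  have key : ∀ t ∈ LP, t ≤ sSup D := by
    rintro t ⟨x, y, hx, hy, hsum, hc, rfl⟩
    exact charikar_key V G x y hx hy hsum hc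
  have hLPne : LP.Nonempty := by
    refine ⟨0, fun _ => 0, fun _ => 0, fun _ => le_rfl, fun _ => le_rfl, by simp, ?_, by simp⟩
    intro e _ v _; exact le_rfl
  have hLPbdd : BddAbove LP := ⟨sSup D, key⟩
  have hDsub : D ⊆ LP := by
    rintro t ⟨S, hS, rfl⟩
    have hn : (0:ℝ) < S.card := by exact_mod_cast Finset.card_pos.2 hS
    refine ⟨fun v => if v ∈ S then (S.card : ℝ)⁻¹ else 0,
      fun e => if ∀ v ∈ e, v ∈ S then (S.card : ℝ)⁻¹ else 0, ?_, ?_, ?_, ?_, ?_⟩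
    · intro v; dsimp only; split <;> positivity
    · intro e; dsimp only; split <;> positivity
    · rw [Finset.sum_ite_mem, Finset.univ_inter, Finset.sum_const, nsmul_eq_mul,
        mul_inv_cancel₀ (ne_of_gt hn)]
    · intro e _ v hv
      dsimp only
      by_cases h : ∀ w ∈ e, w ∈ S
      · rw [if_pos h, if_pos (h v hv)]
      · rw [if_neg h]; split <;> positivity
    · rw [Finset.sum_ite, Finset.sum_const, Finset.sum_const_zero, add_zero, nsmul_eq_mul,
        div_eq_mul_inv]
  exact le_antisymm (csSup_le hLPne key)
    (csSup_le ⟨_, Finset.univ, Finset.univ_nonempty, rfl⟩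
      (fun t ht => le_csSup hLPbdd (hDsub ht)))
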